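/- Non-conservation of ADF semantics: for the may-must argumentation F with two mutually attacking arguments a_p, a_q and f_Q(a_p) = f_Q(a_q) = ((0,0),(1,1)), the labelling assigning undec to both arguments is the unique fixpoint (hence the unique adf.complete, adf.preferred, and adf.grounded labelling) of the operator Γ^F, and this labelling is not an exact labelling of F; moreover no exact labelling of F is a fixpoint of Γ^F. Hence neither Λ^exact_F ⊆ Λ^adf.x_F nor Λ^adf.x_F ⊆ Λ^exact_F holds in general for x ∈ {complete, preferred, grounded}. -/
import Mathlib


inductive Lab : Type
  | inn | out | undec
deriving DecidableEq

structure MMA (A : Type) [Fintype A] [DecidableEq A] where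
  R : A → A → Prop
  decR : DecidableRel R
  n1 : A → ℕ
  n2 : A → ℕ
  m1 : A → ℕ
  m2 : A → ℕ
  hn : ∀ a, n1 a ≤ n2 a
  hm : ∀ a, m1 a ≤ m2 a

variable {A : Type} [Fintype A] [DecidableEq A]

/-- Number of attackers of `a` labelled `out` by `lam`. -/
def outCnt (F : MMA A) (lam : A → Lab) (a : A) : ℕ :=
  letI := F.decR
  (Finset.univ.filter (fun b => F.R b a ∧ lam b = Lab.out)).card

/-- Number of attackers of `a` labelled `in` by `lam`. -/
def inCnt (F : MMA A) (lam : A → Lab) (a : A) : ℕ :=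
  letI := F.decR
  (Finset.univ.filter (fun b => F.R b a ∧ lam b = Lab.inn)).card

/-- `lam` designates label `l` for argument `a` in `F`. -/
def designates (F : MMA A) (lam : A → Lab) (a : A) : Lab → Prop
  | Lab.inn => F.n1 a ≤ outCnt F lam a ∧ inCnt F lam a < F.m2 a
  | Lab.out => F.m1 a ≤ inCnt F lam a ∧ outCnt F lam a < F.n2 a
  | Lab.undec =>
      (F.n2 a ≤ outCnt F lam a ∧ F.m2 a ≤ inCnt F lam a) ∨
      (F.n1 a ≤ outCnt F lam a ∧ outCnt F lam a < F.n2 a) ∨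
      (F.m1 a ≤ inCnt F lam a ∧ inCnt F lam a < F.m2 a) ∨
      (outCnt F lam a < F.n1 a ∧ inCnt F lam a < F.m1 a)

/-- `a`'s label is proper under `lam`. -/
def proper (F : MMA A) (lam : A → Lab) (a : A) : Prop :=
  designates F lam a (lam a)

/-- Exact labelling: every argument's label is proper. -/
def exactLab (F : MMA A) (lam : A → Lab) : Prop :=
  ∀ a, proper F lam a

/-- Pre-maximally proper labelling. -/
def preMaxProper (F : MMA A) (lam : A → Lab) : Prop :=
  ∀ a, proper F lam a ∨ lam a = Lab.undec

/-- Maximally proper labelling. -/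
def maxProper (F : MMA A) (lam : A → Lab) : Prop :=
  preMaxProper F lam ∧
    ∀ lam', preMaxProper F lam' → ∀ a, proper F lam' a → proper F lam a

/-- The order `⪯` on labellings. -/
def labLE (l1 l2 : A → Lab) : Prop :=
  ∀ a, (l1 a = Lab.inn → l2 a = Lab.inn) ∧ (l1 a = Lab.out → l2 a = Lab.out)

/-- Two mutually attacking arguments, both with scales `((0,0),(1,1))`. -/
def F14 : MMA (Fin 2) where
  R := fun b c => b ≠ c
  decR := fun b c => inferInstanceAs (Decidable (b ≠ c))
  n1 := fun _ => 0
  n2 := fun _ => 0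
  m1 := fun _ => 1
  m2 := fun _ => 1
  hn := fun _ => le_refl 0
  hm := fun _ => le_refl 1

/-- `lamx` is a two-valued completion of `lam`: `lam ⪯ lamx` and `lamx` is ⪯-maximal. -/
def twoVal (lam lamx : A → Lab) : Prop :=
  labLE lam lamx ∧ ∀ mu : A → Lab, labLE lamx mu → labLE mu lamx

/-- `lamx` designates only `l` for `a`. -/
def desOnly (F : MMA A) (lamx : A → Lab) (a : A) (l : Lab) : Prop :=
  designates F lamx a l ∧ ∀ l' : Lab, designates F lamx a l' → l' = l

/-- `lam` is a fixpoint of the operator `Γ^F`. -/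
def isGammaFix (F : MMA A) (lam : A → Lab) : Prop :=
  ∀ a, (lam a = Lab.inn ↔ ∀ lamx : A → Lab, twoVal lam lamx → desOnly F lamx a Lab.inn) ∧
       (lam a = Lab.out ↔ ∀ lamx : A → Lab, twoVal lam lamx → desOnly F lamx a Lab.out)

lemma R00 : ¬ F14.R 0 0 := fun h => h rfl
lemma R11 : ¬ F14.R 1 1 := fun h => h rfl
lemma R01 : F14.R 0 1 := by exact (by decide : (0:Fin 2) ≠ 1)
lemma R10 : F14.R 1 0 := by exact (by decide : (1:Fin 2) ≠ 0)

lemma n1_eq (a : Fin 2) : F14.n1 a = 0 := rfl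
lemma n2_eq (a : Fin 2) : F14.n2 a = 0 := rfl
lemma m1_eq (a : Fin 2) : F14.m1 a = 1 := rfl
lemma m2_eq (a : Fin 2) : F14.m2 a = 1 := rfl

lemma inCnt_eq (lam : Fin 2 → Lab) (a : Fin 2) :
    inCnt F14 lam a = if lam (1 - a) = Lab.inn then 1 else 0 := by
  unfold inCnt
  fin_cases a <;>
    rw [Finset.card_filter, Fin.sum_univ_two] <;>
    simp [R00, R11, R01, R10]

lemma not_des_out (lam : Fin 2 → Lab) (a : Fin 2) :
    ¬ designates F14 lam a Lab.out := by
  intro h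
  exact Nat.not_lt_zero _ h.2

lemma des_inn_iff (lam : Fin 2 → Lab) (a : Fin 2) :
    designates F14 lam a Lab.inn ↔ lam (1 - a) ≠ Lab.inn := by
  show (F14.n1 a ≤ outCnt F14 lam a ∧ inCnt F14 lam a < F14.m2 a) ↔ _
  rw [inCnt_eq, n1_eq, m2_eq]
  constructor
  · rintro ⟨-, h⟩ hinn
    rw [if_pos hinn] at h
    exact Nat.lt_irrefl 1 h
  · intro h
    refine ⟨Nat.zero_le _, ?_⟩
    rw [if_neg h]
    exact Nat.one_pos

lemma des_undec_iff (lam : Fin 2 → Lab) (a : Fin 2) :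
    designates F14 lam a Lab.undec ↔ lam (1 - a) = Lab.inn := by
  show ((F14.n2 a ≤ outCnt F14 lam a ∧ F14.m2 a ≤ inCnt F14 lam a) ∨
      (F14.n1 a ≤ outCnt F14 lam a ∧ outCnt F14 lam a < F14.n2 a) ∨
      (F14.m1 a ≤ inCnt F14 lam a ∧ inCnt F14 lam a < F14.m2 a) ∨
      (outCnt F14 lam a < F14.n1 a ∧ inCnt F14 lam a < F14.m1 a)) ↔ _
  rw [inCnt_eq, n1_eq, n2_eq, m1_eq, m2_eq]
  by_cases h : lam (1 - a) = Lab.inn <;> simp [h]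

/-- canonical two-valued completion -/
def cmpl (lam : Fin 2 → Lab) : Fin 2 → Lab :=
  fun a => if lam a = Lab.out then Lab.out else Lab.inn

lemma cmpl_ne_undec (lam : Fin 2 → Lab) (a : Fin 2) : cmpl lam a ≠ Lab.undec := by
  unfold cmpl; split <;> simp

lemma cmpl_eq_inn (lam : Fin 2 → Lab) (a : Fin 2) (h : lam a ≠ Lab.out) :
    cmpl lam a = Lab.inn := if_neg h

lemma twoVal_cmpl (lam : Fin 2 → Lab) : twoVal lam (cmpl lam) := by
  constructor
  · intro a
    constructor
    · intro h
      exact cmpl_eq_inn lam a (by rw [h]; simp)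
    · intro h
      exact if_pos h
  · intro mu hmu a
    rcases hmu a with ⟨h1, h2⟩
    cases hc : cmpl lam a with
    | inn =>
        have hmua : mu a = Lab.inn := h1 hc
        constructor
        · intro _; exact rfl
        · intro h; rw [hmua] at h; cases h
    | out =>
        have hmua : mu a = Lab.out := h2 hc
        constructor
        · intro h; rw [hmua] at h; cases h
        · intro _; exact rfl
    | undec => exact absurd hc (cmpl_ne_undec lam a)

lemma fix_no_out (lam : Fin 2 → Lab) (h : isGammaFix F14 lam) (b : Fin 2) :
    lam b ≠ Lab.out := by
  intro hb
  have := ((h b).2.1 hb) (cmpl lam) (twoVal_cmpl lam)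
  exact not_des_out _ b this.1

lemma fix_unique (lam : Fin 2 → Lab) (h : isGammaFix F14 lam) :
    lam = fun _ => Lab.undec := by
  funext a
  cases hla : lam a with
  | inn =>
      have hd := ((h a).1.1 hla) (cmpl lam) (twoVal_cmpl lam)
      have h2 := (des_inn_iff (cmpl lam) a).1 hd.1
      exact absurd (cmpl_eq_inn lam (1 - a) (fix_no_out lam h (1 - a))) h2
  | out => exact absurd hla (fix_no_out lam h a)
  | undec => rfl

theorem stmt14 :
    isGammaFix F14 (fun _ => Lab.undec) ∧
    (∀ lam : Fin 2 → Lab, isGammaFix F14 lam → lam = fun _ => Lab.undec) ∧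
    ¬ exactLab F14 (fun _ => Lab.undec) ∧
    (∀ lam : Fin 2 → Lab, exactLab F14 lam → ¬ isGammaFix F14 lam) := by
  have hnotex : ¬ exactLab F14 (fun _ => Lab.undec) := by
    intro hex
    have h0 := hex 0
    have := (des_undec_iff (fun _ => Lab.undec) 0).1 h0
    cases this
  refine ⟨?_, fix_unique, hnotex, ?_⟩
  · intro a
    constructor
    · constructor
      · intro h; cases h
      · intro hall
        have hd := hall (cmpl fun _ => Lab.undec) (twoVal_cmpl _)
        have h2 := (des_inn_iff _ a).1 hd.1
        exact absurd (cmpl_eq_inn _ (1 - a) (by simp)) h2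
    · constructor
      · intro h; cases h
      · intro hall
        have hd := hall (cmpl fun _ => Lab.undec) (twoVal_cmpl _)
        exact absurd hd.1 (not_des_out _ a)
  · intro lam hex hfix
    rw [fix_unique lam hfix] at hex
    exact hnotex hex
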